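/- Let p_1, ..., p_k be integral polynomials and let n ∈ ℕ. Then there exists N' ∈ ℕ such that for every colouring χ: {1,...,N'} → {1,...,n} with n colours there exist a ∈ ℤ and d > 0 such that {a, a+p_1(d), ..., a+p_k(d)} ⊆ {1,...,N'} and χ takes the same value on all of a, a+p_1(d), ..., a+p_k(d). -/
import Mathlib

open Polynomial Finset

/-- The auxiliary "shifted" polynomial used in the PET induction. -/
noncomputable def pvdwG (q p : ℤ[X]) (t : ℤ) : ℤ[X] :=
  p.comp (X + C t) - (q + C (p.eval t))

/-- The auxiliary family used in the PET induction. -/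
noncomputable def pvdwQ (P : Finset ℤ[X]) (q : ℤ[X]) (T : Finset ℤ) : Finset ℤ[X] :=
  (P ×ˢ T).image fun pt => pvdwG q pt.1 pt.2

lemma pvdwG_eval (q p : ℤ[X]) (t e : ℤ) :
    (pvdwG q p t).eval e = p.eval (e + t) - q.eval e - p.eval t := by
  simp [pvdwG]; ring

lemma pvdwG_eval_zero (q p : ℤ[X]) (t : ℤ) (hq : q.eval 0 = 0) :
    (pvdwG q p t).eval 0 = 0 := by
  simp [pvdwG_eval, hq]

lemma natDegree_comp_X_add_C (p : ℤ[X]) (t : ℤ) :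
    (p.comp (X + C t)).natDegree = p.natDegree := by
  rw [natDegree_comp, natDegree_X_add_C, mul_one]

lemma leadingCoeff_comp_X_add_C (p : ℤ[X]) (t : ℤ) :
    (p.comp (X + C t)).leadingCoeff = p.leadingCoeff := by
  rcases eq_or_ne p.natDegree 0 with h | h
  · rcases natDegree_eq_zero.mp h with ⟨a, rfl⟩
    simp
  · rw [leadingCoeff_comp (by rw [natDegree_X_add_C]; norm_num), leadingCoeff_X_add_C, one_pow, mul_one]

lemma natDegree_pvdwG_le (q p : ℤ[X]) (t : ℤ) :
    (pvdwG q p t).natDegree ≤ max p.natDegree q.natDegree := by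
  refine le_trans (natDegree_sub_le _ _) ?_
  rw [natDegree_comp_X_add_C, natDegree_add_C]

/-- degree facts when `deg p > deg q`. -/
lemma pvdwG_deg_gt (q p : ℤ[X]) (t : ℤ) (h : q.natDegree < p.natDegree) :
    (pvdwG q p t).natDegree = p.natDegree ∧
      (pvdwG q p t).leadingCoeff = p.leadingCoeff := by
  have hB : (q + C (p.eval t)).natDegree = q.natDegree := natDegree_add_C
  have hA : (p.comp (X + C t)).natDegree = p.natDegree := natDegree_comp_X_add_C p t
  have hlt : (q + C (p.eval t)).natDegree < (p.comp (X + C t)).natDegree := by omega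
  constructor
  · rw [pvdwG, natDegree_sub_eq_left_of_natDegree_lt hlt, hA]
  · have hdeg : (q + C (p.eval t)).degree < (p.comp (X + C t)).degree := by
      apply degree_lt_degree; omega
    rw [pvdwG, sub_eq_add_neg, add_comm, leadingCoeff_add_of_degree_lt
        (by rwa [degree_neg]), leadingCoeff_comp_X_add_C]
/-- If `p, q` are nonzero with equal degree `δ ≥ 1` and equal leading coefficients,
then `pvdwG q p t` has natDegree < δ (or is zero). -/
lemma pvdwG_deg_eq_lc_eq (q p : ℤ[X]) (t : ℤ) (hp : p ≠ 0) (hq : q ≠ 0)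
    (hd : p.natDegree = q.natDegree) (hd1 : 1 ≤ q.natDegree)
    (hlc : p.leadingCoeff = q.leadingCoeff) :
    (pvdwG q p t).natDegree < q.natDegree ∨ pvdwG q p t = 0 := by
  have hAne : p.comp (X + C t) ≠ 0 := comp_X_add_C_ne_zero_iff.mpr hp
  have hBdeg : (q + C (p.eval t)).natDegree = q.natDegree := natDegree_add_C
  have hBne : q + C (p.eval t) ≠ 0 := fun h => by
    rw [h] at hBdeg; simp only [natDegree_zero] at hBdeg; omega
  have hAdeg : (p.comp (X + C t)).natDegree = q.natDegree := by
    rw [natDegree_comp_X_add_C, hd]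
  have hdeg : (p.comp (X + C t)).degree = (q + C (p.eval t)).degree := by
    rw [degree_eq_natDegree hAne, degree_eq_natDegree hBne, hAdeg, hBdeg]
  have hBlc : (q + C (p.eval t)).leadingCoeff = q.leadingCoeff := by
    rw [leadingCoeff, hBdeg, coeff_add, coeff_C, if_neg (by omega), add_zero, leadingCoeff]
  have hAlc : (p.comp (X + C t)).leadingCoeff = (q + C (p.eval t)).leadingCoeff := by
    rw [leadingCoeff_comp_X_add_C, hlc, hBlc]
  have hlt := degree_sub_lt hdeg hAne hAlc
  rcases eq_or_ne (pvdwG q p t) 0 with h0 | h0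
  · exact Or.inr h0
  · left
    have h2 : (pvdwG q p t).degree = ((pvdwG q p t).natDegree : WithBot ℕ) :=
      degree_eq_natDegree h0
    rw [show p.comp (X + C t) - (q + C (p.eval t)) = pvdwG q p t from rfl, h2,
      degree_eq_natDegree hAne, hAdeg] at hlt
    exact_mod_cast hlt

/-- nonzero integral polynomial has positive natDegree -/
lemma natDegree_pos_of_eval_zero (p : ℤ[X]) (hp : p ≠ 0) (h0 : p.eval 0 = 0) :
    1 ≤ p.natDegree := by
  by_contra h
  push_neg at h
  interval_cases hd : p.natDegree
  · rcases natDegree_eq_zero.mp hd with ⟨a, rfl⟩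
    rw [eval_C] at h0
    exact hp (by rw [h0, map_zero])

/-- The set of leading coefficients in degree `j`. -/
noncomputable def ldeg (P : Finset ℤ[X]) (j : ℕ) : Finset ℤ :=
  (P.filter fun p => p ≠ 0 ∧ p.natDegree = j).image Polynomial.leadingCoeff

noncomputable def wdeg (P : Finset ℤ[X]) (j : ℕ) : ℕ := (ldeg P j).card

lemma mem_pvdwQ {P : Finset ℤ[X]} {q : ℤ[X]} {T : Finset ℤ} {g : ℤ[X]} :
    g ∈ pvdwQ P q T ↔ ∃ p ∈ P, ∃ t ∈ T, g = pvdwG q p t := by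
  simp only [pvdwQ, Finset.mem_image, Finset.mem_product]
  constructor
  · rintro ⟨⟨p, t⟩, ⟨hp, ht⟩, rfl⟩
    exact ⟨p, hp, t, ht, rfl⟩
  · rintro ⟨p, hp, t, ht, rfl⟩
    exact ⟨⟨p, t⟩, ⟨hp, ht⟩, rfl⟩

lemma ldeg_pvdwQ_subset_of_gt (P : Finset ℤ[X]) (q : ℤ[X]) (T : Finset ℤ) (j : ℕ)
    (hj : q.natDegree < j) : ldeg (pvdwQ P q T) j ⊆ ldeg P j := by
  intro l hl
  simp only [ldeg, Finset.mem_image, Finset.mem_filter] at hl ⊢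
  obtain ⟨g, ⟨hgmem, hgne, hgdeg⟩, rfl⟩ := hl
  obtain ⟨p, hp, t, ht, rfl⟩ := mem_pvdwQ.mp hgmem
  have hdp : q.natDegree < p.natDegree := by
    by_contra hle
    push_neg at hle
    have := natDegree_pvdwG_le q p t
    omega
  obtain ⟨h1, h2⟩ := pvdwG_deg_gt q p t hdp
  refine ⟨p, ⟨hp, ?_, by omega⟩, h2.symm⟩
  rintro rfl
  simp only [natDegree_zero] at hdp
  omega

lemma ldeg_pvdwQ_subset_at (P : Finset ℤ[X]) (q : ℤ[X]) (T : Finset ℤ)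
    (hq0 : q ≠ 0) (hqint : q.eval 0 = 0)
    (hP0 : (0:ℤ[X]) ∉ P) (hmin : ∀ p ∈ P, q.natDegree ≤ p.natDegree) :
    ldeg (pvdwQ P q T) q.natDegree ⊆
      ((ldeg P q.natDegree).image (· - q.leadingCoeff)).erase 0 := by
  intro l hl
  simp only [ldeg, Finset.mem_image, Finset.mem_filter] at hl
  obtain ⟨g, ⟨hgmem, hgne, hgdeg⟩, rfl⟩ := hl
  obtain ⟨p, hp, t, ht, rfl⟩ := mem_pvdwQ.mp hgmem
  have hpne : p ≠ 0 := fun h => hP0 (h ▸ hp)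
  have hd1 : 1 ≤ q.natDegree := natDegree_pos_of_eval_zero q hq0 hqint
  have hdp : p.natDegree = q.natDegree := by
    rcases lt_or_eq_of_le (hmin p hp) with h | h
    · exfalso
      obtain ⟨h1, _⟩ := pvdwG_deg_gt q p t h
      omega
    · omega
  have hlcne : p.leadingCoeff ≠ q.leadingCoeff := by
    intro hlc
    rcases pvdwG_deg_eq_lc_eq q p t hpne hq0 hdp hd1 hlc with h | h
    · omega
    · exact hgne h
  have hAdeg : (p.comp (X + C t)).natDegree = q.natDegree := by
    rw [natDegree_comp_X_add_C, hdp]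
  have key : (pvdwG q p t).leadingCoeff = p.leadingCoeff - q.leadingCoeff := by
    have hc : (pvdwG q p t).coeff q.natDegree
        = p.leadingCoeff - q.leadingCoeff := by
      rw [pvdwG, coeff_sub, coeff_add, coeff_C, if_neg (by omega), add_zero]
      congr 1
      rw [← hAdeg, ← leadingCoeff]
      exact leadingCoeff_comp_X_add_C p t
    rw [leadingCoeff, hgdeg, hc]
  rw [key, Finset.mem_erase]
  constructor
  · simpa [sub_eq_zero] using hlcne
  · simp only [Finset.mem_image]
    refine ⟨p.leadingCoeff, ?_, rfl⟩
    simp only [ldeg, Finset.mem_image, Finset.mem_filter]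
    exact ⟨p, ⟨hp, hpne, hdp⟩, rfl⟩

lemma wdeg_pvdwQ_lt (P : Finset ℤ[X]) (q : ℤ[X]) (T : Finset ℤ)
    (hq : q ∈ P) (hq0 : q ≠ 0) (hqint : q.eval 0 = 0)
    (hP0 : (0:ℤ[X]) ∉ P) (hmin : ∀ p ∈ P, q.natDegree ≤ p.natDegree) :
    wdeg (pvdwQ P q T) q.natDegree < wdeg P q.natDegree := by
  have hsub := ldeg_pvdwQ_subset_at P q T hq0 hqint hP0 hmin
  have hmem : q.leadingCoeff ∈ ldeg P q.natDegree := by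
    simp only [ldeg, Finset.mem_image, Finset.mem_filter]
    exact ⟨q, ⟨hq, hq0, rfl⟩, rfl⟩
  have h0mem : (0:ℤ) ∈ (ldeg P q.natDegree).image (· - q.leadingCoeff) := by
    simp only [Finset.mem_image]
    exact ⟨q.leadingCoeff, hmem, by ring⟩
  calc wdeg (pvdwQ P q T) q.natDegree
      ≤ (((ldeg P q.natDegree).image (· - q.leadingCoeff)).erase 0).card :=
        Finset.card_le_card hsub
    _ < ((ldeg P q.natDegree).image (· - q.leadingCoeff)).card :=
        Finset.card_erase_lt_of_mem h0mem
    _ ≤ wdeg P q.natDegree := Finset.card_image_le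
/-- Sum of gaps `dv i` for `u ≤ i < s`. -/
def Dnn (dv : ℕ → ℤ) (u s : ℕ) : ℤ := ∑ i ∈ Finset.Ico u s, dv i

/-- The "success" configuration: a monochromatic polynomial pattern in `[1,N]`. -/
def DoneP (P : Finset ℤ[X]) {κ : Type} (χ : ℤ → κ) (N : ℕ) : Prop :=
  ∃ a d : ℤ, 1 ≤ d ∧ d ≤ N ∧ 1 ≤ a ∧ a ≤ N ∧
    ∀ p ∈ P, (1 ≤ a + p.eval d ∧ a + p.eval d ≤ N ∧ χ (a + p.eval d) = χ a)

/-- A colour-focused fan of depth `s`. -/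
def FanP (P : Finset ℤ[X]) {κ : Type} (χ : ℤ → κ) (N B s : ℕ) : Prop :=
  ∃ (a : ℤ) (dv : ℕ → ℤ) (c : ℕ → κ),
    (∀ u v, u < v → v < s → c u ≠ c v) ∧ 1 ≤ a ∧ a ≤ N ∧
    (∀ i, i < s → 1 ≤ dv i ∧ dv i ≤ B) ∧
    ∀ u, u < s → ∀ p ∈ P, (1 ≤ a + p.eval (Dnn dv u s) ∧
      a + p.eval (Dnn dv u s) ≤ N ∧ χ (a + p.eval (Dnn dv u s)) = c u)

/-- The polynomial van der Waerden property for a family `P`. -/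
def GoodP (P : Finset ℤ[X]) : Prop :=
  ∀ (κ : Type) [Fintype κ], ∃ N : ℕ, 1 ≤ N ∧ ∀ χ : ℤ → κ, DoneP P χ N

lemma doneP_mono {P : Finset ℤ[X]} {κ : Type} {χ : ℤ → κ} {N N' : ℕ}
    (h : N ≤ N') (hD : DoneP P χ N) : DoneP P χ N' := by
  obtain ⟨a, d, h1, h2, h3, h4, h5⟩ := hD
  have hNN : (N:ℤ) ≤ N' := by exact_mod_cast h
  exact ⟨a, d, h1, by omega, h3, by omega, fun p hp => by
    obtain ⟨u1, u2, u3⟩ := h5 p hp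
    exact ⟨u1, by omega, u3⟩⟩

lemma Dnn_bounds {dv : ℕ → ℤ} {B s : ℕ} (hdv : ∀ i, i < s → 1 ≤ dv i ∧ dv i ≤ B)
    {u : ℕ} (hu : u < s) : 1 ≤ Dnn dv u s ∧ Dnn dv u s ≤ (s:ℤ) * B := by
  constructor
  · have : ∀ i ∈ Finset.Ico u s, (1:ℤ) ≤ dv i := fun i hi => by
      rw [Finset.mem_Ico] at hi
      exact (hdv i hi.2).1
    have hc := Finset.card_nsmul_le_sum (Finset.Ico u s) dv 1 this
    rw [nsmul_eq_mul, mul_one] at hc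
    have hcard : 1 ≤ (Finset.Ico u s).card := by
      rw [Nat.card_Ico]; omega
    calc (1:ℤ) ≤ ((Finset.Ico u s).card : ℤ) := by exact_mod_cast hcard
      _ ≤ Dnn dv u s := hc
  · have : ∀ i ∈ Finset.Ico u s, dv i ≤ (B:ℤ) := fun i hi => by
      rw [Finset.mem_Ico] at hi
      exact (hdv i hi.2).2
    calc Dnn dv u s ≤ (Finset.Ico u s).card • (B:ℤ) := Finset.sum_le_card_nsmul _ _ _ this
      _ ≤ (s:ℤ) * B := by
          rw [nsmul_eq_mul, Nat.card_Ico]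
          have h1 : ((s - u : ℕ):ℤ) ≤ (s:ℤ) := by omega
          have h2 : (0:ℤ) ≤ (B:ℤ) := by positivity
          exact mul_le_mul_of_nonneg_right h1 h2

lemma Dnn_snoc (dv : ℕ → ℤ) (e : ℤ) (u s : ℕ) (hu : u ≤ s) :
    Dnn (fun i => if i = s then e else dv i) u (s+1) = Dnn dv u s + e := by
  rw [Dnn, Finset.sum_Ico_succ_top hu, if_pos rfl]
  congr 1
  apply Finset.sum_congr rfl
  intro i hi
  rw [Finset.mem_Ico] at hi
  rw [if_neg (by omega)]

lemma window_invariance {κ : Type} (χ : ℤ → κ) (K : ℕ) (x y : ℤ)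
    (h : (fun i : Fin (2*K+1) => χ (x + (i:ℤ) - K)) =
         (fun i : Fin (2*K+1) => χ (y + (i:ℤ) - K)))
    (i : ℤ) (h1 : -(K:ℤ) ≤ i) (h2 : i ≤ K) : χ (x + i) = χ (y + i) := by
  have hidx : ((i + K).toNat : ℤ) = i + K := Int.toNat_of_nonneg (by omega)
  have hlt : (i + K).toNat < 2*K+1 := by omega
  have h3 := congrFun h ⟨(i+K).toNat, hlt⟩
  simp only at h3
  rw [hidx] at h3
  rw [show x + (i + K) - K = x + i by ring, show y + (i + K) - K = y + i by ring] at h3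
  exact h3
lemma fan_step (P : Finset ℤ[X]) (q : ℤ[X]) (κ : Type) [Fintype κ]
    (hP0 : ∀ p ∈ P, p.eval 0 = 0) (h0P : (0:ℤ[X]) ∉ P)
    (hmin : ∀ p ∈ P, q.natDegree ≤ p.natDegree)
    (IHQ : ∀ T : Finset ℤ, GoodP (pvdwQ P q T)) :
    ∀ s : ℕ, ∃ N B : ℕ, 1 ≤ N ∧ 1 ≤ B ∧
      ∀ χ : ℤ → κ, DoneP P χ N ∨ FanP P χ N B s := by
  intro s
  induction s with
  | zero =>
    refine ⟨1, 1, le_rfl, le_rfl, fun χ => Or.inr ?_⟩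
    exact ⟨1, fun _ => 1, fun _ => χ 0, fun u v h1 h2 => absurd h2 (by omega),
      le_rfl, by norm_num, fun i hi => absurd hi (by omega),
      fun u hu => absurd hu (by omega)⟩
  | succ s IH =>
    obtain ⟨N, B, hN1, hB1, hdich⟩ := IH
    have hsB : (0:ℤ) ≤ (s:ℤ) * (B:ℤ) := by positivity
    set T : Finset ℤ := Finset.Icc (0:ℤ) ((s:ℤ)*B) with hT
    have h0T : (0:ℤ) ∈ T := by
      rw [hT, Finset.mem_Icc]
      exact ⟨le_rfl, hsB⟩
    set Pbar : ℕ := (P ×ˢ T).sup (fun pt => (pt.1.eval pt.2).natAbs) with hPbar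
    set K : ℕ := N + Pbar with hK
    obtain ⟨M, hM1, hMdich⟩ := IHQ T (Fin (2*K+1) → κ)
    set Cq : ℕ := (Finset.Icc (1:ℤ) (M:ℤ)).sup (fun e' => (q.eval e').natAbs) with hCq
    set sh : ℤ := (Cq:ℤ) + K with hsh
    refine ⟨M + 2*Cq + 2*K + 2*N + s*B + 2, B + M, by omega, by omega, fun χ => ?_⟩
    obtain ⟨b, e, he1, heM, hb1, hbM, hgood⟩ :=
      hMdich (fun x (i : Fin (2*K+1)) => χ (x + sh + (i:ℤ) - K))
    -- the key invariance property of the window around b + sh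
    have hinv : ∀ g ∈ pvdwQ P q T, ∀ i : ℤ, -(K:ℤ) ≤ i → i ≤ K →
        χ (b + sh + i + g.eval e) = χ (b + sh + i) := by
      intro g hg i hi1 hi2
      obtain ⟨_, _, u3⟩ := hgood g hg
      have h3 := window_invariance χ K (b + g.eval e + sh) (b + sh) u3 i hi1 hi2
      rw [show b + g.eval e + sh + i = b + sh + i + g.eval e by ring] at h3
      exact h3
    -- bound on |q.eval e|
    have hqCq : (q.eval e).natAbs ≤ Cq := by
      rw [hCq]
      exact Finset.le_sup (f := fun e' => (q.eval e').natAbs)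
        (Finset.mem_Icc.mpr ⟨he1, heM⟩)
    -- the eval-bound for pairs in P ×ˢ T
    have hPbarB : ∀ p ∈ P, ∀ t ∈ T, (p.eval t).natAbs ≤ Pbar := by
      intro p hp t ht
      rw [hPbar]
      exact Finset.le_sup (f := fun pt => (pt.1.eval pt.2).natAbs) (b := (p, t))
        (Finset.mem_product.mpr ⟨hp, ht⟩)
    -- apply the depth-s dichotomy in the window starting at b + sh
    rcases hdich (fun y => χ (b + sh - 1 + y)) with hdone | hfan
    · -- done within the window: done globally
      left
      obtain ⟨a₀, d, hd1, hdN, ha1, haN, hpts⟩ := hdone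
      refine ⟨b + sh - 1 + a₀, d, hd1, by push_cast; omega, by push_cast; omega,
        by push_cast; omega, fun p hp => ?_⟩
      obtain ⟨u1, u2, u3⟩ := hpts p hp
      beta_reduce at u3
      rw [show b + sh - 1 + (a₀ + p.eval d) = b + sh - 1 + a₀ + p.eval d by ring] at u3
      exact ⟨by push_cast; omega, by push_cast; omega, u3⟩
    · -- a fan of depth s in the window
      obtain ⟨a₀, dv, c, hinj, ha01, ha0N, hdv, hfanpts⟩ := hfan
      have hDb : ∀ u, u < s → 1 ≤ Dnn dv u s ∧ Dnn dv u s ≤ (s:ℤ)*B :=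
        fun u hu => Dnn_bounds hdv hu
      have hDT : ∀ u, u < s → Dnn dv u s ∈ T := by
        intro u hu
        rw [hT, Finset.mem_Icc]
        obtain ⟨w1, w2⟩ := hDb u hu
        omega
      by_cases hcol : ∃ u, u < s ∧ χ (b + sh - 1 + a₀) = c u
      · -- collision: done
        left
        obtain ⟨u, hu, hcu⟩ := hcol
        obtain ⟨w1, w2⟩ := hDb u hu
        refine ⟨b + sh - 1 + a₀, Dnn dv u s, w1, by push_cast; omega,
          by push_cast; omega, by push_cast; omega, fun p hp => ?_⟩
        obtain ⟨u1, u2, u3⟩ := hfanpts u hu p hp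
        beta_reduce at u3
        rw [show b + sh - 1 + (a₀ + p.eval (Dnn dv u s))
            = b + sh - 1 + a₀ + p.eval (Dnn dv u s) by ring] at u3
        exact ⟨by push_cast; omega, by push_cast; omega, by rw [u3, hcu]⟩
      · -- no collision: extend the fan
        right
        push_neg at hcol
        refine ⟨b + sh - 1 + a₀ - q.eval e, (fun i => if i = s then e else dv i),
          (fun u => if u = s then χ (b + sh - 1 + a₀) else c u), ?_, ?_, ?_, ?_, ?_⟩
        · -- injectivity
          intro u v huv hv
          beta_reduce
          rcases Nat.lt_succ_iff_lt_or_eq.mp hv with hv' | rfl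
          · rw [if_neg (by omega), if_neg (by omega)]
            exact hinj u v huv hv'
          · rw [if_neg (by omega), if_pos rfl]
            exact fun h => (hcol u huv) h.symm
        · -- 1 ≤ a'
          have hq2 : -((Cq:ℕ):ℤ) ≤ q.eval e ∧ q.eval e ≤ ((Cq:ℕ):ℤ) := by omega
          push_cast
          omega
        · -- a' ≤ Nfin
          have hq2 : -((Cq:ℕ):ℤ) ≤ q.eval e ∧ q.eval e ≤ ((Cq:ℕ):ℤ) := by omega
          push_cast
          omega
        · -- dv' bounds
          intro i hi
          beta_reduce
          rcases Nat.lt_succ_iff_lt_or_eq.mp hi with hi' | rfl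
          · rw [if_neg (by omega)]
            obtain ⟨w1, w2⟩ := hdv i hi'
            refine ⟨w1, le_trans w2 ?_⟩
            push_cast
            omega
          · rw [if_pos rfl]
            refine ⟨he1, le_trans heM ?_⟩
            push_cast
            omega
        · -- the fan conditions
          intro u hu p hp
          beta_reduce
          rcases Nat.lt_succ_iff_lt_or_eq.mp hu with hu' | rfl
          · -- old fans, shifted
            have hDsnoc : Dnn (fun i => if i = s then e else dv i) u (s+1)
                = Dnn dv u s + e := Dnn_snoc dv e u s (by omega)
            have hgQ : pvdwG q p (Dnn dv u s) ∈ pvdwQ P q T :=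
              mem_pvdwQ.mpr ⟨p, hp, Dnn dv u s, hDT u hu', rfl⟩
            have hpteq : b + sh - 1 + a₀ - q.eval e
                  + p.eval (Dnn (fun i => if i = s then e else dv i) u (s+1))
                = b + sh + (a₀ - 1 + p.eval (Dnn dv u s)) + (pvdwG q p (Dnn dv u s)).eval e := by
              rw [hDsnoc, pvdwG_eval, show Dnn dv u s + e = e + Dnn dv u s by ring]
              ring
            obtain ⟨u1, u2, u3⟩ := hfanpts u hu' p hp
            beta_reduce at u3
            have hpD : (p.eval (Dnn dv u s)).natAbs ≤ Pbar := hPbarB p hp _ (hDT u hu')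
            have hi1 : -(K:ℤ) ≤ a₀ - 1 + p.eval (Dnn dv u s) := by push_cast; omega
            have hi2 : a₀ - 1 + p.eval (Dnn dv u s) ≤ (K:ℤ) := by push_cast; omega
            have hcolor := hinv (pvdwG q p (Dnn dv u s)) hgQ
              (a₀ - 1 + p.eval (Dnn dv u s)) hi1 hi2
            obtain ⟨v1, v2, _⟩ := hgood (pvdwG q p (Dnn dv u s)) hgQ
            rw [hpteq]
            refine ⟨?_, ?_, ?_⟩
            · push_cast
              omega
            · push_cast
              omega
            · rw [if_neg (by omega), hcolor,
                show b + sh + (a₀ - 1 + p.eval (Dnn dv u s))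
                  = b + sh - 1 + (a₀ + p.eval (Dnn dv u s)) by ring]
              exact u3
          · -- the new fan
            have hDsnoc : Dnn (fun i => if i = u then e else dv i) u (u+1) = e := by
              rw [Dnn_snoc dv e u u le_rfl, Dnn, Finset.Ico_self, Finset.sum_empty, zero_add]
            have hgQ : pvdwG q p 0 ∈ pvdwQ P q T :=
              mem_pvdwQ.mpr ⟨p, hp, 0, h0T, rfl⟩
            have hpteq : b + sh - 1 + a₀ - q.eval e
                  + p.eval (Dnn (fun i => if i = u then e else dv i) u (u+1))
                = b + sh + (a₀ - 1) + (pvdwG q p 0).eval e := by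
              rw [hDsnoc, pvdwG_eval, hP0 p hp, add_zero, sub_zero]
              ring
            have hi1 : -(K:ℤ) ≤ a₀ - 1 := by push_cast; omega
            have hi2 : a₀ - 1 ≤ (K:ℤ) := by push_cast; omega
            have hcolor := hinv (pvdwG q p 0) hgQ (a₀ - 1) hi1 hi2
            obtain ⟨v1, v2, _⟩ := hgood (pvdwG q p 0) hgQ
            rw [hpteq]
            refine ⟨?_, ?_, ?_⟩
            · push_cast
              omega
            · push_cast
              omega
            · rw [if_pos rfl, hcolor,
                show b + sh + (a₀ - 1) = b + sh - 1 + a₀ by ring]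
lemma ldeg_erase_zero (P : Finset ℤ[X]) (j : ℕ) : ldeg (P.erase 0) j = ldeg P j := by
  unfold ldeg
  congr 1
  ext g
  simp only [Finset.mem_filter, Finset.mem_erase]
  tauto

/-- The PET measure. -/
noncomputable def pvdwMu (D : ℕ) (P : Finset ℤ[X]) : Lex (Fin (D+1) →₀ ℕ) :=
  toLex (Finsupp.equivFunOnFinite.symm (fun i : Fin (D+1) => wdeg P (D - (i:ℕ))))

lemma pvdwMu_lt (D : ℕ) (Qf Pf : Finset ℤ[X]) (δ : ℕ) (hδD : δ ≤ D)
    (h1 : wdeg Qf δ < wdeg Pf δ) (h2 : ∀ j, δ < j → wdeg Qf j ≤ wdeg Pf j) :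
    pvdwMu D Qf < pvdwMu D Pf := by
  have hval : ∀ (R : Finset ℤ[X]) (i : Fin (D+1)),
      (ofLex (pvdwMu D R)) i = wdeg R (D - (i:ℕ)) := by
    intro R i
    simp [pvdwMu]
  set Sd := Finset.univ.filter
      (fun i : Fin (D+1) => wdeg Qf (D - (i:ℕ)) ≠ wdeg Pf (D - (i:ℕ))) with hSd
  have hi₀ : (⟨D - δ, by omega⟩ : Fin (D+1)) ∈ Sd := by
    rw [hSd, Finset.mem_filter]
    refine ⟨Finset.mem_univ _, ?_⟩
    have hδ' : D - (D - δ) = δ := by omega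
    simp only [hδ']
    omega
  have hne : Sd.Nonempty := ⟨_, hi₀⟩
  set j := Sd.min' hne with hj
  have hjmem : j ∈ Sd := Finset.min'_mem _ _
  have hjne : wdeg Qf (D - (j:ℕ)) ≠ wdeg Pf (D - (j:ℕ)) := by
    have h := hjmem
    rw [hSd, Finset.mem_filter] at h
    exact h.2
  have hjle : (j:ℕ) ≤ D - δ := Finset.min'_le _ _ hi₀
  have hdjδ : δ ≤ D - (j:ℕ) := by omega
  have hlt : wdeg Qf (D - (j:ℕ)) < wdeg Pf (D - (j:ℕ)) := by
    rcases eq_or_lt_of_le hdjδ with h | h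
    · rw [← h]
      exact h1
    · exact lt_of_le_of_ne (h2 _ h) hjne
  show Finsupp.Lex (· < ·) (· < ·) (ofLex (pvdwMu D Qf)) (ofLex (pvdwMu D Pf))
  refine ⟨j, ?_, ?_⟩
  · intro d hd
    rw [hval, hval]
    by_contra hne'
    have hdS : d ∈ Sd := by
      rw [hSd, Finset.mem_filter]
      exact ⟨Finset.mem_univ _, hne'⟩
    have := Finset.min'_le _ _ hdS
    rw [← hj] at this
    exact absurd (lt_of_le_of_lt this hd) (lt_irrefl _)
  · rw [hval, hval]
    exact hlt

/-- PvdW for families each of whose degrees is at most `D`. -/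
theorem goodP_of_bounded (D : ℕ) (P : Finset ℤ[X])
    (hP : ∀ p ∈ P, p.eval 0 = 0 ∧ p.natDegree ≤ D) : GoodP P := by
  have hwf : WellFounded ((· < ·) : Lex (Fin (D+1) →₀ ℕ) → Lex (Fin (D+1) →₀ ℕ) → Prop) :=
    IsWellFounded.wf
  have key : ∀ m : Lex (Fin (D+1) →₀ ℕ), ∀ P : Finset ℤ[X], pvdwMu D P = m →
      (∀ p ∈ P, p.eval 0 = 0 ∧ p.natDegree ≤ D) → GoodP P := by
    intro m
    induction m using hwf.induction with
    | _ m IH =>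
    intro P hμ hPinv
    rcases Finset.eq_empty_or_nonempty (P.erase 0) with hem | hne
    · -- all members of P are 0
      intro κ _
      refine ⟨1, le_rfl, fun χ => ⟨1, 1, le_rfl, by norm_num, le_rfl, by norm_num,
        fun p hp => ?_⟩⟩
      have hp0 : p = 0 := by
        by_contra h
        have : p ∈ P.erase 0 := Finset.mem_erase.mpr ⟨h, hp⟩
        rw [hem] at this
        exact absurd this (Finset.notMem_empty _)
      subst hp0
      norm_num
    · -- pick a minimal-degree nonzero element
      obtain ⟨q, hqP', hqmin⟩ := Finset.exists_min_image (P.erase 0) Polynomial.natDegree hne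
      have hq0 : q ≠ 0 := (Finset.mem_erase.mp hqP').1
      have hqP : q ∈ P := (Finset.mem_erase.mp hqP').2
      have hqev : q.eval 0 = 0 := (hPinv q hqP).1
      have hqD : q.natDegree ≤ D := (hPinv q hqP).2
      have h0P' : (0:ℤ[X]) ∉ P.erase 0 := Finset.notMem_erase _ _
      have hP0' : ∀ p ∈ P.erase 0, p.eval 0 = 0 :=
        fun p hp => (hPinv p (Finset.mem_erase.mp hp).2).1
      have hmin' : ∀ p ∈ P.erase 0, q.natDegree ≤ p.natDegree := hqmin
      -- invariants and measure decrease for the auxiliary families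
      have IHQ : ∀ T : Finset ℤ, GoodP (pvdwQ (P.erase 0) q T) := by
        intro T
        have hQinv : ∀ g ∈ pvdwQ (P.erase 0) q T, g.eval 0 = 0 ∧ g.natDegree ≤ D := by
          intro g hg
          obtain ⟨p, hp, t, ht, rfl⟩ := mem_pvdwQ.mp hg
          constructor
          · exact pvdwG_eval_zero q p t hqev
          · refine le_trans (natDegree_pvdwG_le q p t) ?_
            have := (hPinv p (Finset.mem_erase.mp hp).2).2
            omega
        have hlt : pvdwMu D (pvdwQ (P.erase 0) q T) < pvdwMu D P := by
          refine pvdwMu_lt D _ _ q.natDegree hqD ?_ ?_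
          · have := wdeg_pvdwQ_lt (P.erase 0) q T hqP' hq0 hqev h0P' hmin'
            rwa [show wdeg (P.erase 0) q.natDegree = wdeg P q.natDegree by
              unfold wdeg; rw [ldeg_erase_zero]] at this
          · intro j hj
            have hsub := ldeg_pvdwQ_subset_of_gt (P.erase 0) q T j hj
            rw [ldeg_erase_zero] at hsub
            exact Finset.card_le_card hsub
        rw [hμ] at hlt
        exact IH _ hlt _ rfl hQinv
      -- run the color-focusing machine on P.erase 0
      intro κ _
      obtain ⟨N, B, hN1, hB1, hdich⟩ :=
        fan_step (P.erase 0) q κ hP0' h0P' hmin' IHQ (Fintype.card κ + 1)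
      refine ⟨N, hN1, fun χ => ?_⟩
      rcases hdich χ with hdone | hfan
      · obtain ⟨a, d, w1, w2, w3, w4, w5⟩ := hdone
        refine ⟨a, d, w1, w2, w3, w4, fun p hp => ?_⟩
        rcases eq_or_ne p 0 with rfl | hp0
        · norm_num
          exact ⟨w3, w4⟩
        · exact w5 p (Finset.mem_erase.mpr ⟨hp0, hp⟩)
      · exfalso
        obtain ⟨a, dv, c, hinj, -, -, -, -⟩ := hfan
        have hcinj : Function.Injective (fun i : Fin (Fintype.card κ + 1) => c (i:ℕ)) := by
          intro x y hxy
          by_contra hne'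
          rcases lt_or_gt_of_ne (fun h : (x:ℕ) = (y:ℕ) => hne' (Fin.ext h)) with h | h
          · exact hinj _ _ h y.isLt hxy
          · exact hinj _ _ h x.isLt hxy.symm
        have := Fintype.card_le_of_injective _ hcinj
        simp at this
  exact key (pvdwMu D P) P rfl hP
/-- **Polynomial Van der Waerden theorem (Bergelson–Leibman).**
Let `p 1, ..., p k` be integral polynomials (integer coefficients, vanishing
at `0`) and let `n ∈ ℕ`.  Then there exists `N'` such that for every colouring
of `{1, ..., N'}` with `n` colours there exist `a ∈ ℤ` and `d > 0` such that
`{a, a + p 1 d, ..., a + p k d} ⊆ {1, ..., N'}` is monochromatic. -/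
theorem polynomial_vdw {k : ℕ} (n : ℕ) (p : Fin k → Polynomial ℤ)
    (hp0 : ∀ i, (p i).eval 0 = 0) :
    ∃ N' : ℕ, ∀ χ : ℤ → Fin n,
      ∃ a d : ℤ, 0 < d ∧
        a ∈ Set.Icc (1 : ℤ) (N' : ℤ) ∧
        (∀ i : Fin k, a + (p i).eval d ∈ Set.Icc (1 : ℤ) (N' : ℤ)) ∧
        (∀ i : Fin k, χ (a + (p i).eval d) = χ a) := by
  set P : Finset ℤ[X] := Finset.image p Finset.univ with hP
  set D : ℕ := Finset.univ.sup (fun i => (p i).natDegree) with hD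
  have hgood : GoodP P := by
    apply goodP_of_bounded D
    intro r hr
    rw [hP] at hr
    obtain ⟨i, -, rfl⟩ := Finset.mem_image.mp hr
    exact ⟨hp0 i, Finset.le_sup (f := fun i => (p i).natDegree) (Finset.mem_univ i)⟩
  obtain ⟨N, hN1, hdich⟩ := hgood (Fin n)
  refine ⟨N, fun χ => ?_⟩
  obtain ⟨a, d, w1, w2, w3, w4, w5⟩ := hdich χ
  refine ⟨a, d, by omega, Set.mem_Icc.mpr ⟨w3, w4⟩, fun i => ?_, fun i => ?_⟩
  · have := w5 (p i) (by rw [hP]; exact Finset.mem_image_of_mem p (Finset.mem_univ i))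
    exact Set.mem_Icc.mpr ⟨this.1, this.2.1⟩
  · exact (w5 (p i) (by rw [hP]; exact Finset.mem_image_of_mem p (Finset.mem_univ i))).2.2
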